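/- The map Q*: ℝ³ \ {0} → S⁴ ⊂ S₀ defined by Q*(x) = (1/(√6·|x|))·[[−x₃, 0, √3 x₁], [0, −x₃, √3 x₂], [√3 x₁, √3 x₂, 2x₃]] satisfies |∇Q*(x)|² = 2/|x|² for all x ≠ 0. Consequently, for every ρ > 0, (1/ρ)·∫_{B_ρ} (1/2)|∇Q*|² dx = 4π. -/

import Mathlib

open MeasureTheory

/-- The degree-zero homogeneous tangent map `Q* : ℝ³ \ {0} → S⁴ ⊂ S₀`. -/
noncomputable def Qstar (x : EuclideanSpace ℝ (Fin 3)) : Matrix (Fin 3) (Fin 3) ℝ :=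
  (Real.sqrt 6 * ‖x‖)⁻¹ •
    !![-(x 2), 0, Real.sqrt 3 * x 0;
       0, -(x 2), Real.sqrt 3 * x 1;
       Real.sqrt 3 * x 0, Real.sqrt 3 * x 1, 2 * x 2]

/-- The Frobenius gradient squared `|∇Q*|² = ∑ₖ ∑ᵢⱼ (∂ₖ(Q*)ᵢⱼ)²`. -/
noncomputable def QstarGradSq (x : EuclideanSpace ℝ (Fin 3)) : ℝ :=
  ∑ k, ∑ i, ∑ j,
    (fderiv ℝ (fun y => Qstar y i j) x (EuclideanSpace.single k 1)) ^ 2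

local notation "E3" => EuclideanSpace ℝ (Fin 3)

noncomputable def Lmat : Fin 3 → Fin 3 → (E3 →L[ℝ] ℝ) :=
  ![![(-1 : ℝ) • EuclideanSpace.proj 2, 0, Real.sqrt 3 • EuclideanSpace.proj 0],
    ![0, (-1 : ℝ) • EuclideanSpace.proj 2, Real.sqrt 3 • EuclideanSpace.proj 1],
    ![Real.sqrt 3 • EuclideanSpace.proj 0, Real.sqrt 3 • EuclideanSpace.proj 1,
      (2 : ℝ) • EuclideanSpace.proj 2]]

lemma qstar_entry (y : E3) (i j : Fin 3) :
    Qstar y i j = (Real.sqrt 6 * ‖y‖)⁻¹ * Lmat i j y := by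
  fin_cases i <;> fin_cases j <;>
    simp [Qstar, Lmat, Matrix.smul_apply]

lemma hasFDerivAt_norm' (x : E3) (hx : x ≠ 0) :
    HasFDerivAt (fun y : E3 => ‖y‖) (‖x‖⁻¹ • innerSL ℝ x) x := by
  have h2 : HasFDerivAt (fun y : E3 => ‖y‖ ^ 2) (2 • innerSL ℝ x) x :=
    (hasStrictFDerivAt_norm_sq x).hasFDerivAt
  have hne : ‖x‖ ^ 2 ≠ 0 := pow_ne_zero _ (norm_ne_zero_iff.2 hx)
  have h3 := h2.sqrt hne
  have heq : (fun y : E3 => Real.sqrt (‖y‖ ^ 2)) = fun y : E3 => ‖y‖ := by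
    funext y; rw [Real.sqrt_sq (norm_nonneg y)]
  rw [heq] at h3
  convert h3 using 1
  · rfl
  rw [Real.sqrt_sq (norm_nonneg x)]
  ext v
  simp [smul_smul]
  ring

lemma key (ℓ : E3 →L[ℝ] ℝ) (x : E3) (hx : x ≠ 0) (v : E3) :
    fderiv ℝ (fun y => (Real.sqrt 6 * ‖y‖)⁻¹ * ℓ y) x v
      = (Real.sqrt 6 * ‖x‖)⁻¹ * ℓ v
        - (Real.sqrt 6)⁻¹ * ℓ x * (inner ℝ x v : ℝ) / ‖x‖ ^ 3 := by
  have hr : (0:ℝ) < ‖x‖ := norm_pos_iff.2 hx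
  have hs : (0:ℝ) < Real.sqrt 6 := Real.sqrt_pos.2 (by norm_num)
  have hm : HasFDerivAt (fun y : E3 => Real.sqrt 6 * ‖y‖)
      (Real.sqrt 6 • (‖x‖⁻¹ • innerSL ℝ x)) x :=
    (hasFDerivAt_norm' x hx).const_mul _
  have hi := (hasDerivAt_inv (x := Real.sqrt 6 * ‖x‖) (by positivity)).comp_hasFDerivAt x hm
  simp only [Function.comp_def] at hi
  have hf := hi.mul ℓ.hasFDerivAt
  rw [show (fun y : E3 => (Real.sqrt 6 * ‖y‖)⁻¹ * ℓ y) = (fun y : E3 => (Real.sqrt 6 * ‖y‖)⁻¹) * ⇑ℓ from rfl, hf.fderiv]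
  simp only [ContinuousLinearMap.add_apply, ContinuousLinearMap.smul_apply,
    ContinuousLinearMap.neg_apply, innerSL_apply_apply, smul_eq_mul]
  have h6 : Real.sqrt 6 ^ 2 = 6 := Real.sq_sqrt (by norm_num)
  field_simp
  ring_nf

lemma key' (x : E3) (hx : x ≠ 0) (i j : Fin 3) (k : Fin 3) :
    fderiv ℝ (fun y => Qstar y i j) x (EuclideanSpace.single k 1)
      = (Real.sqrt 6 * ‖x‖)⁻¹ * Lmat i j (EuclideanSpace.single k 1)
        - (Real.sqrt 6)⁻¹ * Lmat i j x * x k / ‖x‖ ^ 3 := by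
  have : (fun y => Qstar y i j) = fun y => (Real.sqrt 6 * ‖y‖)⁻¹ * Lmat i j y := by
    funext y; exact qstar_entry y i j
  rw [this, key _ x hx]
  congr 1
  rw [real_inner_comm, EuclideanSpace.inner_single_left]
  simp

lemma alg (a b c r s t : ℝ) (hr : 0 < r) (hr2 : r ^ 2 = a ^ 2 + b ^ 2 + c ^ 2)
    (hs : s ^ 2 = 6) (hs0 : 0 < s) (ht : t ^ 2 = 3) :
    (-(s⁻¹ * c * a) / r ^ 3 * -1) ^ 2 +
        (r⁻¹ * s⁻¹ * t - s⁻¹ * (t * a) * a / r ^ 3) ^ 2 +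
      ((-(s⁻¹ * c * a) / r ^ 3 * -1) ^ 2 +
        (s⁻¹ * (t * b) * a / r ^ 3) ^ 2) +
    ((r⁻¹ * s⁻¹ * t - s⁻¹ * (t * a) * a / r ^ 3) ^ 2 + (s⁻¹ * (t * b) * a / r ^ 3) ^ 2 +
      (s⁻¹ * (2 * c) * a / r ^ 3 * -1) ^ 2) +
    ((-(s⁻¹ * c * b) / r ^ 3 * -1) ^ 2 +
        (s⁻¹ * (t * a) * b / r ^ 3) ^ 2 +
      ((-(s⁻¹ * c * b) / r ^ 3 * -1) ^ 2 +
        (r⁻¹ * s⁻¹ * t - s⁻¹ * (t * b) * b / r ^ 3) ^ 2) +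
    ((s⁻¹ * (t * a) * b / r ^ 3) ^ 2 + (r⁻¹ * s⁻¹ * t - s⁻¹ * (t * b) * b / r ^ 3) ^ 2 +
      (s⁻¹ * (2 * c) * b / r ^ 3 * -1) ^ 2)) +
    ((-(r⁻¹ * s⁻¹) - -(s⁻¹ * c * c) / r ^ 3) ^ 2 +
      (s⁻¹ * (t * a) * c / r ^ 3 * -1) ^ 2 +
    ((-(r⁻¹ * s⁻¹) - -(s⁻¹ * c * c) / r ^ 3) ^ 2 +
      (s⁻¹ * (t * b) * c / r ^ 3 * -1) ^ 2) +
    ((s⁻¹ * (t * a) * c / r ^ 3 * -1) ^ 2 +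
      (s⁻¹ * (t * b) * c / r ^ 3 * -1) ^ 2 +
    (r⁻¹ * s⁻¹ * 2 - s⁻¹ * (2 * c) * c / r ^ 3) ^ 2)) =
    2 / r ^ 2 := by
  have hrne : r ≠ 0 := hr.ne'
  have hsne : s ≠ 0 := hs0.ne'
  field_simp
  ring_nf
  have e1 : s ^ 42 = 6 ^ 21 := by
    have : s ^ 42 = (s ^ 2) ^ 21 := by ring
    rw [this, hs]
  have e2 : s ^ 44 = 6 ^ 22 := by
    have : s ^ 44 = (s ^ 2) ^ 22 := by ring
    rw [this, hs]
  rw [hs, ht]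
  linear_combination (6 * (r ^ 2 - a ^ 2 - b ^ 2 - c ^ 2)) * hr2

lemma part1 (x : E3) (hx : x ≠ 0) : QstarGradSq x = 2 / ‖x‖ ^ 2 := by
  have hr : (0:ℝ) < ‖x‖ := norm_pos_iff.2 hx
  have h6 : Real.sqrt 6 ^ 2 = 6 := Real.sq_sqrt (by norm_num)
  have h3 : Real.sqrt 3 ^ 2 = 3 := Real.sq_sqrt (by norm_num)
  have hs : (0:ℝ) < Real.sqrt 6 := Real.sqrt_pos.2 (by norm_num)
  have hx2 : ‖x‖ ^ 2 = x 0 ^ 2 + x 1 ^ 2 + x 2 ^ 2 := by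
    rw [EuclideanSpace.norm_eq, Real.sq_sqrt (by positivity)]
    simp [Fin.sum_univ_three, sq_abs]
  unfold QstarGradSq
  simp only [Fin.sum_univ_three]
  simp only [key' x hx, Lmat]
  simp only [Matrix.cons_val_zero, Matrix.cons_val_one, Matrix.head_cons, Matrix.cons_val_two,
    Matrix.tail_cons, ContinuousLinearMap.smul_apply, ContinuousLinearMap.zero_apply,
    PiLp.proj_apply, EuclideanSpace.single_apply, smul_eq_mul]
  norm_num [Fin.ext_iff]
  linear_combination alg (x 0) (x 1) (x 2) ‖x‖ (Real.sqrt 6) (Real.sqrt 3) hr hx2 h6 hs h3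

lemma vol_unit_ball : (volume (Metric.ball (0:E3) 1)).toReal = 4 / 3 * Real.pi := by
  rw [EuclideanSpace.volume_ball]
  have hcard : Fintype.card (Fin 3) = 3 := by simp
  rw [hcard]
  have hG : Real.Gamma ((3:ℝ) / 2 + 1) = 3 / 4 * Real.sqrt Real.pi := by
    rw [Real.Gamma_add_one (by norm_num)]
    have : (3:ℝ)/2 = 1/2 + 1 := by norm_num
    rw [this, Real.Gamma_add_one (by norm_num), Real.Gamma_one_half_eq]
    ring
  have hπ : Real.sqrt Real.pi ^ 3 / Real.Gamma ((3:ℝ)/2 + 1) = 4 / 3 * Real.pi := by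
    rw [hG]
    have h1 : Real.sqrt Real.pi ^ 3 = Real.pi * Real.sqrt Real.pi := by
      have : Real.sqrt Real.pi ^ 2 = Real.pi := Real.sq_sqrt Real.pi_pos.le
      calc Real.sqrt Real.pi ^ 3 = Real.sqrt Real.pi ^ 2 * Real.sqrt Real.pi := by ring
        _ = Real.pi * Real.sqrt Real.pi := by rw [this]
    rw [h1]
    have hs : Real.sqrt Real.pi ≠ 0 := by positivity
    field_simp
  push_cast
  rw [hπ]
  simp
  positivity

lemma part2 (ρ : ℝ) (hρ : 0 < ρ) :
    (1 / ρ) * ∫ x in Metric.ball (0 : E3) ρ, (1 / 2) * QstarGradSq x = 4 * Real.pi := by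
  set F : ℝ → ℝ := Set.indicator (Set.Ioo 0 ρ) (fun r => (r ^ 2)⁻¹) with hF
  have h1 : ∫ x in Metric.ball (0 : E3) ρ, (1 / 2) * QstarGradSq x = ∫ x : E3, F ‖x‖ := by
    rw [← integral_indicator measurableSet_ball]
    refine integral_congr_ae ?_
    have h0 : ∀ᵐ x : E3, x ≠ 0 := by
      rw [ae_iff]
      simpa using measure_singleton (0 : E3)
    filter_upwards [h0] with x hx
    have hxn : (0:ℝ) < ‖x‖ := norm_pos_iff.2 hx
    by_cases hb : ‖x‖ < ρ
    · rw [Set.indicator_of_mem (by simpa [Metric.mem_ball] using hb),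
        hF, Set.indicator_of_mem (Set.mem_Ioo.2 ⟨hxn, hb⟩), part1 x hx]
      field_simp
    · rw [Set.indicator_of_notMem (by simpa [Metric.mem_ball] using hb),
        hF, Set.indicator_of_notMem (fun h => hb h.2)]
  rw [h1, integral_fun_norm_addHaar volume F]
  have hdim : Module.finrank ℝ E3 = 3 := by simp
  rw [hdim]
  have h2 : ∫ y in Set.Ioi (0:ℝ), y ^ (3 - 1) • F y = ρ := by
    have heq : ∀ y : ℝ, y ^ (3 - 1) • F y
        = Set.indicator (Set.Ioo 0 ρ) (fun y => y ^ 2 * (y ^ 2)⁻¹) y := by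
      intro y
      by_cases hy : y ∈ Set.Ioo (0:ℝ) ρ
      · rw [hF]; rw [Set.indicator_of_mem hy, Set.indicator_of_mem hy]; norm_num
      · rw [hF]; rw [Set.indicator_of_notMem hy, Set.indicator_of_notMem hy]; simp
    simp only [heq]
    rw [setIntegral_indicator measurableSet_Ioo]
    have : Set.Ioi (0:ℝ) ∩ Set.Ioo 0 ρ = Set.Ioo 0 ρ := by
      ext y
      simp only [Set.mem_inter_iff, Set.mem_Ioi, Set.mem_Ioo, and_iff_right_iff_imp]
      exact fun h => h.1
    rw [this]
    rw [setIntegral_congr_fun measurableSet_Ioo (g := fun _ => (1:ℝ))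
      (fun y hy => by exact mul_inv_cancel₀ (pow_ne_zero _ (ne_of_gt hy.1)))]
    simp [Real.volume_Ioo, ENNReal.toReal_ofReal hρ.le, hρ.le]
  rw [h2, measureReal_def, vol_unit_ball]
  simp only [smul_eq_mul, nsmul_eq_mul]
  field_simp
  norm_num

/-- `|∇Q*(x)|² = 2/|x|²` for all `x ≠ 0`; consequently
`(1/ρ)·∫_{B_ρ} (1/2)|∇Q*|² dx = 4π` for every `ρ > 0`. -/
theorem Qstar_gradient_and_energy :
    (∀ x : EuclideanSpace ℝ (Fin 3), x ≠ 0 → QstarGradSq x = 2 / ‖x‖ ^ 2) ∧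
    (∀ ρ : ℝ, 0 < ρ →
      (1 / ρ) * ∫ x in Metric.ball (0 : EuclideanSpace ℝ (Fin 3)) ρ,
        (1 / 2) * QstarGradSq x = 4 * Real.pi) :=
  ⟨part1, part2⟩
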